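/- Let φ : ℝ → ℝ be a C² function with bounded second derivative such that φ(0) = 0 and φ'(0) = 0. Let ζ : ℝ → ℝ be an infinitely differentiable nondecreasing function with ζ(y) = 0 for y ≤ 1 and ζ(y) = 1 for y ≥ 2, and for m ≥ 1 define ψ_m(y) = φ(y) ζ(my). Then (ψ_m) converges uniformly on ℝ to the function y ↦ φ(y⁺); for every y ∈ ℝ, ψ_m'(y) → φ'(y⁺) as m → ∞; and for every y ∈ ℝ, ψ_m''(y) → 𝟙_{{y>0}} φ''(y) as m → ∞, where 𝟙_{{y>0}} equals 1 if y > 0 and 0 otherwise. -/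

import Mathlib

open Filter

/-- Let `φ` be `C²` with bounded second derivative, `φ(0) = 0`, `φ'(0) = 0`, and let `ζ` be a
smooth nondecreasing cutoff (`ζ = 0` on `(-∞,1]`, `ζ = 1` on `[2,∞)`). Then
`ψ_m(y) = φ(y) ζ(my)` converges uniformly to `y ↦ φ(y⁺)`, `ψ_m'(y) → φ'(y⁺)` pointwise,
and `ψ_m''(y) → 𝟙_{y>0} φ''(y)` pointwise. -/
theorem psi_m_phi_tendsto (φ : ℝ → ℝ) (hφ : ContDiff ℝ 2 φ)
    (M : ℝ) (hM : ∀ y : ℝ, |iteratedDeriv 2 φ y| ≤ M)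
    (hφ0 : φ 0 = 0) (hφ'0 : deriv φ 0 = 0)
    (ζ : ℝ → ℝ) (hζ : ContDiff ℝ (⊤ : ℕ∞) ζ) (hζmono : Monotone ζ)
    (hζ0 : ∀ y : ℝ, y ≤ 1 → ζ y = 0) (hζ1 : ∀ y : ℝ, 2 ≤ y → ζ y = 1) :
    TendstoUniformly (fun (m : ℕ) (y : ℝ) => φ y * ζ (m * y))
      (fun y => φ (max y 0)) atTop ∧
    (∀ y : ℝ, Tendsto (fun m : ℕ => deriv (fun z => φ z * ζ (m * z)) y) atTop
      (nhds (deriv φ (max y 0)))) ∧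
    (∀ y : ℝ, Tendsto (fun m : ℕ => iteratedDeriv 2 (fun z => φ z * ζ (m * z)) y) atTop
      (nhds ((if 0 < y then (1 : ℝ) else 0) * iteratedDeriv 2 φ y))) := by
  have hM0 : 0 ≤ M := le_trans (abs_nonneg _) (hM 0)
  have hφdiff : Differentiable ℝ φ := hφ.differentiable (by norm_num)
  have h2 : ContDiff ℝ 1 (deriv φ) := by
    have h := (contDiff_succ_iff_deriv.mp (show ContDiff ℝ (1 + 1) φ by exact_mod_cast hφ)).2.2
    exact h
  have hφ'diff : Differentiable ℝ (deriv φ) := h2.differentiable one_ne_zero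
  have hM' : ∀ t : ℝ, ‖deriv (deriv φ) t‖ ≤ M := by
    intro t
    have h := hM t
    rwa [show (2 : ℕ) = 1 + 1 from rfl, iteratedDeriv_succ, iteratedDeriv_one,
      ← Real.norm_eq_abs] at h
  -- ζ bounds
  have hζ01 : ∀ t : ℝ, 0 ≤ ζ t ∧ ζ t ≤ 1 := by
    intro t
    constructor
    · rcases le_or_gt t 1 with h | h
      · rw [hζ0 t h]
      · rw [← hζ0 1 le_rfl]; exact hζmono h.le
    · rcases le_or_gt 2 t with h | h
      · rw [hζ1 t h]
      · rw [← hζ1 2 le_rfl]; exact hζmono h.le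
  -- Taylor-type bound
  have key : ∀ c : ℝ, 0 < c → ∀ y ∈ Set.Icc (0 : ℝ) c, |φ y| ≤ M * c * c := by
    intro c hc y hy
    have hd1 : ∀ x ∈ Set.Icc (0 : ℝ) c, ‖deriv φ x‖ ≤ M * c := by
      intro x hx
      have h := norm_image_sub_le_of_norm_deriv_le_segment'
        (f := deriv φ) (f' := deriv (deriv φ)) (a := 0) (b := c)
        (fun z _ => (hφ'diff z).hasDerivAt.hasDerivWithinAt)
        (fun z _ => hM' z) x hx
      rw [hφ'0, sub_zero, sub_zero] at h
      exact h.trans (mul_le_mul_of_nonneg_left hx.2 hM0)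
    have h := norm_image_sub_le_of_norm_deriv_le_segment'
      (f := φ) (f' := deriv φ) (a := 0) (b := c)
      (fun z _ => (hφdiff z).hasDerivAt.hasDerivWithinAt)
      (fun z hz => hd1 z (Set.Ico_subset_Icc_self hz)) y hy
    rw [hφ0, sub_zero, sub_zero, Real.norm_eq_abs] at h
    exact h.trans (mul_le_mul_of_nonneg_left hy.2 (mul_nonneg hM0 hc.le))
  -- local equalities
  have hneg : ∀ y : ℝ, y ≤ 0 → ∀ m : ℕ, 1 ≤ m →
      (fun z => φ z * ζ (m * z)) =ᶠ[nhds y] (fun _ => (0 : ℝ)) := by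
    intro y hy m hm
    have hm0 : (0 : ℝ) < m := by exact_mod_cast hm
    have hmem : Set.Iio (1 / (m : ℝ)) ∈ nhds y :=
      Iio_mem_nhds (lt_of_le_of_lt hy (by positivity))
    filter_upwards [hmem] with z hz
    have : (m : ℝ) * z < 1 := by
      rw [Set.mem_Iio, lt_div_iff₀ hm0] at hz
      linarith [hz]
    rw [hζ0 _ this.le, mul_zero]
  have hpos : ∀ y : ℝ, 0 < y → ∀ m : ℕ, 2 / y < (m : ℝ) →
      (fun z => φ z * ζ (m * z)) =ᶠ[nhds y] φ := by
    intro y hy m hm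
    have hm0 : (0 : ℝ) < m := lt_of_le_of_lt (by positivity) hm
    have h2y : 2 < (m : ℝ) * y := by
      rw [div_lt_iff₀ hy] at hm; linarith [hm]
    have hmem : Set.Ioi (2 / (m : ℝ)) ∈ nhds y :=
      Ioi_mem_nhds (by rw [div_lt_iff₀ hm0]; linarith [h2y])
    filter_upwards [hmem] with z hz
    have : (2 : ℝ) ≤ m * z := by
      rw [Set.mem_Ioi, div_lt_iff₀ hm0] at hz
      nlinarith [hz]
    rw [hζ1 _ this, mul_one]
  refine ⟨?_, ?_, ?_⟩
  · -- uniform convergence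
    rw [Metric.tendstoUniformly_iff]
    intro ε hε
    have h0 : Tendsto (fun m : ℕ => M * (2 / (m : ℝ)) * (2 / (m : ℝ))) atTop (nhds 0) := by
      have h1 : Tendsto (fun m : ℕ => (2 : ℝ) / m) atTop (nhds 0) :=
        tendsto_const_div_atTop_nhds_zero_nat 2
      have := (tendsto_const_nhds (x := M)).mul h1 |>.mul h1
      simpa using this
    filter_upwards [h0.eventually_lt_const hε, eventually_ge_atTop 1] with m hm hm1 y
    have hm0 : (0 : ℝ) < m := by exact_mod_cast hm1
    rcases le_or_gt y 0 with hy | hy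
    · have hmy : (m : ℝ) * y ≤ 1 :=
        le_trans (mul_nonpos_of_nonneg_of_nonpos hm0.le hy) zero_le_one
      rw [hζ0 _ hmy, mul_zero, max_eq_right hy, hφ0, dist_self]
      exact hε
    · rcases le_or_gt 2 ((m : ℝ) * y) with h2 | h2
      · rw [hζ1 _ h2, mul_one, max_eq_left hy.le, dist_self]
        exact hε
      · have hyc : y ∈ Set.Icc (0 : ℝ) (2 / m) := by
          constructor
          · exact hy.le
          · rw [le_div_iff₀ hm0]; nlinarith [h2]
        have hb := key (2 / m) (by positivity) y hyc
        rw [Real.dist_eq, max_eq_left hy.le]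
        have hζy := hζ01 ((m : ℝ) * y)
        have : |φ y - φ y * ζ (m * y)| = |φ y| * |1 - ζ (m * y)| := by
          rw [← abs_mul]; ring_nf
        rw [this]
        have h1ζ : |1 - ζ ((m : ℝ) * y)| ≤ 1 := by
          rw [abs_le]; constructor <;> linarith [hζy.1, hζy.2]
        calc |φ y| * |1 - ζ ((m : ℝ) * y)| ≤ M * (2 / m) * (2 / m) * 1 := by
              apply mul_le_mul hb h1ζ (abs_nonneg _)
              positivity
          _ < ε := by rw [mul_one]; exact hm
  · -- first derivative
    intro y
    rcases lt_or_ge 0 y with hy | hy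
    · rw [max_eq_left hy.le]
      refine Tendsto.congr' ?_ (tendsto_const_nhds (x := deriv φ y))
      filter_upwards [tendsto_natCast_atTop_atTop.eventually_gt_atTop (2 / y)] with m hm
      exact ((hpos y hy m hm).deriv_eq).symm
    · rw [max_eq_right hy, hφ'0]
      refine Tendsto.congr' ?_ (tendsto_const_nhds (x := (0 : ℝ)))
      filter_upwards [eventually_ge_atTop 1] with m hm
      rw [(hneg y hy m hm).deriv_eq, deriv_const]
  · -- second derivative
    intro y
    rcases lt_or_ge 0 y with hy | hy
    · rw [if_pos hy, one_mul]
      refine Tendsto.congr' ?_ (tendsto_const_nhds (x := iteratedDeriv 2 φ y))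
      filter_upwards [tendsto_natCast_atTop_atTop.eventually_gt_atTop (2 / y)] with m hm
      exact ((hpos y hy m hm).iteratedDeriv_eq 2).symm
    · rw [if_neg (not_lt.mpr hy), zero_mul]
      refine Tendsto.congr' ?_ (tendsto_const_nhds (x := (0 : ℝ)))
      filter_upwards [eventually_ge_atTop 1] with m hm
      rw [(hneg y hy m hm).iteratedDeriv_eq 2]
      simp [show (2 : ℕ) = 1 + 1 from rfl, iteratedDeriv_succ, iteratedDeriv_one]
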